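/- Assume the data assumptions of problem (P), that F₁ is additionally μ-strongly monotone with μ > 0, that (σ_k) is nonincreasing with σ_k > 0, and that the step sizes satisfy 4 t_k² L_k² + 2 t_k σ_k μ ≤ 1 for all k ≥ 1. Then for the optimistic extragradient iterates, for all z ∈ Z and all k ≥ 1: E_{k+1}(z) + D_{k+1} ≤ (1 − t_k σ_k μ)(E_k(z) + D_k) − t_k[⟨F₂(z), z^{k+1/2} − z⟩ + g₂(z^{k+1/2}) − g₂(z) + σ_k(⟨F₁(z), z^{k+1/2} − z⟩ + g₁(z^{k+1/2}) − g₁(z))]. -/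
import Mathlib


noncomputable section

open scoped RealInnerProductSpace
open Filter Topology

variable {Z : Type*} [NormedAddCommGroup Z] [InnerProductSpace ℝ Z] [CompleteSpace Z]

/-- Effective domain of an extended-real-valued function. -/
def edom {Z : Type*} (g : Z → EReal) : Set Z := {z | g z < ⊤}

/-- `g` is proper, convex and lower semicontinuous. -/
structure ProperConvexLsc (g : Z → EReal) : Prop where
  ne_bot : ∀ z, g z ≠ ⊥
  proper : ∃ z, g z < ⊤
  convex : ∀ x y : Z, ∀ a b : ℝ, 0 ≤ a → 0 ≤ b → a + b = 1 →
    g (a • x + b • y) ≤ (a : EReal) * g x + (b : EReal) * g y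
  lsc : LowerSemicontinuous g

/-- Monotonicity of an operator on a real Hilbert space. -/
def IsMonotoneOp (F : Z → Z) : Prop := ∀ x y : Z, 0 ≤ ⟪F x - F y, x - y⟫

/-- Lipschitz continuity with (real) constant `L`. -/
def IsLipOp (L : ℝ) (F : Z → Z) : Prop := ∀ x y : Z, ‖F x - F y‖ ≤ L * ‖x - y‖

/-- The bifunction `H^{(F,g)}(z,y) = ⟪F y, z - y⟫ + g z - g y`. -/
def Hb (F : Z → Z) (g : Z → EReal) (z y : Z) : EReal :=
  ((⟪F y, z - y⟫ : ℝ) : EReal) + g z - g y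

/-- The localized dual gap function `Θ(z | F,g,C)`. -/
def gapFn (F : Z → Z) (g : Z → EReal) (C : Set Z) (z : Z) : EReal :=
  ⨆ y ∈ C, Hb F g z y

/-- The convex subdifferential of an extended-real-valued function. -/
def subdiff (g : Z → EReal) (x : Z) : Set Z :=
  {ξ : Z | ∀ y : Z, ((⟪ξ, y - x⟫ : ℝ) : EReal) + g x ≤ g y}

/-- The solution set `zer(F + ∂g)`. -/
def zerFg (F : Z → Z) (g : Z → EReal) : Set Z := {z : Z | -F z ∈ subdiff g z}

/-- The normal cone to a set `C` at `z`. -/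
def normalCone (C : Set Z) (z : Z) : Set Z :=
  {ξ : Z | z ∈ C ∧ ∀ z' ∈ C, ⟪ξ, z' - z⟫ ≤ 0}

/-- The solution set `zer(F + ∂g + N_C)`. -/
def zerFgN (F : Z → Z) (g : Z → EReal) (C : Set Z) : Set Z :=
  {z : Z | ∃ ξ ∈ subdiff g z, ∃ p ∈ normalCone C z, F z + ξ + p = 0}

/-- The solution set `S₁` of problem (P): points of `S₂` solving the upper HVI over `S₂`. -/
def solP (F₁ : Z → Z) (g₁ : Z → EReal) (S₂ : Set Z) : Set Z :=
  {zs : Z | zs ∈ S₂ ∧ ∀ u ∈ S₂, 0 ≤ Hb F₁ g₁ u zs}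

/-- `(α,ρ)`-weak sharpness of the solution set `S` of `HVI(F,g)`. -/
def WeakSharp (F : Z → Z) (g : Z → EReal) (S : Set Z) (α ρ : ℝ) : Prop :=
  ∀ zs ∈ S, ∀ z ∈ edom g,
    (((α / ρ) * Metric.infDist z S ^ ρ : ℝ) : EReal) ≤ Hb F g z zs

/-- Support function of a set. -/
def suppFn (p : Z) (C : Set Z) : EReal := ⨆ z ∈ C, ((⟪p, z⟫ : ℝ) : EReal)

/-- The Fitzpatrick-type function `φ^{(F,g)}(z,u)`. -/
def phiFn (F : Z → Z) (g : Z → EReal) (z u : Z) : EReal :=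
  ⨆ y ∈ edom g, (Hb F g z y + ((⟪y, u⟫ : ℝ) : EReal))

/-- `x = prox_{τ G}(u)`, via the variational characterization
`⟪u - x, v - x⟫ ≤ τ (G v - G x)` for all `v`. -/
def IsProx (τ : ℝ) (G : Z → EReal) (u x : Z) : Prop :=
  ∀ v : Z, ((⟪u - x, v - x⟫ : ℝ) : EReal) ≤ (τ : EReal) * (G v - G x)

/-- The Tikhonov-regularized operator `V_k = F₂ + σ_k F₁`. -/
def Vop (F₁ F₂ : Z → Z) (σ : ℕ → ℝ) (k : ℕ) (x : Z) : Z := F₂ x + σ k • F₁ x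

/-- The Tikhonov-regularized function `G_k = g₂ + σ_k g₁`. -/
def Gfun (g₁ g₂ : Z → EReal) (σ : ℕ → ℝ) (k : ℕ) (v : Z) : EReal :=
  g₂ v + ((σ k : ℝ) : EReal) * g₁ v

/-- The Attouch–Czarnecki summability condition. -/
def ACcond (F₂ : Z → Z) (g₂ : Z → EReal) (S₂ : Set Z) (t σ : ℕ → ℝ) : Prop :=
  ∀ p : Z, (∃ zs : Z, p ∈ normalCone S₂ zs) →
    ∃ M : ℝ, ∀ K : ℕ,
      (∑ k ∈ Finset.Icc 1 K,
        ((t k : ℝ) : EReal) * ((⨆ zs ∈ S₂, phiFn F₂ g₂ zs (σ k • p)) - suppFn (σ k • p) S₂))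
        ≤ (M : EReal)

/-- `T_K = ∑_{k=1}^K t_k`. -/
def Tsum (t : ℕ → ℝ) (K : ℕ) : ℝ := ∑ k ∈ Finset.Icc 1 K, t k

/-- The ergodic average `z̄^K` (here `w k` plays the role of `z^{k+1/2}`). -/
def zbar (t : ℕ → ℝ) (w : ℕ → Z) (K : ℕ) : Z :=
  (Tsum t K)⁻¹ • ∑ k ∈ Finset.Icc 1 K, t k • w k

/-- Weights `γ_k = 1/∏_{i=1}^k (1 - t_i σ_i μ)` (so `γ_0 = 1`). -/
def gammaW (t σ : ℕ → ℝ) (μ : ℝ) (k : ℕ) : ℝ :=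
  (∏ i ∈ Finset.Icc 1 k, (1 - t i * σ i * μ))⁻¹

/-- The weighted ergodic average used in the strongly monotone case. -/
def zbarW (t σ : ℕ → ℝ) (μ : ℝ) (w : ℕ → Z) (K : ℕ) : Z :=
  (∑ i ∈ Finset.Icc 1 K, t i * σ i * gammaW t σ μ i)⁻¹ •
    ∑ i ∈ Finset.Icc 1 K, (t i * σ i * gammaW t σ μ i) • w i

/-- Convex tangent cone `T_C(x) = cl(⋃_{λ>0} (C - x)/λ)`. -/
def tangentConeCvx (C : Set Z) (x : Z) : Set Z :=
  closure {v : Z | ∃ lam : ℝ, 0 < lam ∧ ∃ c ∈ C, v = lam⁻¹ • (c - x)}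

/-- Polar cone of a set. -/
def polarCone (K : Set Z) : Set Z := {z : Z | ∀ x ∈ K, ⟪z, x⟫ ≤ 0}

private lemma prox_ne_top {τ : ℝ} (hτ : 0 < τ) {G : Z → EReal} {u x v : Z}
    (hbot : ∀ y, G y ≠ ⊥) (hv : G v ≠ ⊤) (h : IsProx τ G u x) : G x ≠ ⊤ := by
  intro htop
  have h2 := h v
  rw [htop, EReal.sub_top, EReal.mul_bot_of_pos (by exact_mod_cast hτ)] at h2
  exact EReal.coe_ne_bot _ (le_bot_iff.mp h2)

private lemma isProx_real {τ gv gx : ℝ} {G : Z → EReal} {u x : Z} (v : Z)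
    (h : IsProx τ G u x) (hv : G v = (gv : EReal)) (hx : G x = (gx : EReal)) :
    ⟪u - x, v - x⟫ ≤ τ * (gv - gx) := by
  have h2 := h v
  rw [hv, hx, ← EReal.coe_sub, ← EReal.coe_mul] at h2
  exact_mod_cast h2

set_option maxHeartbeats 4000000 in
/-- refined energy recursion under `μ`-strong monotonicity of `F₁`
and the step condition `4 t_k² L_k² + 2 t_k σ_k μ ≤ 1`. -/
theorem energy_recursion_strongly_monotone
    (F₁ F₂ : Z → Z) (LF₁ LF₂ : ℝ) (g₁ g₂ : Z → EReal)
    (hF₁m : IsMonotoneOp F₁) (hF₂m : IsMonotoneOp F₂)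
    (hF₁L : IsLipOp LF₁ F₁) (hF₂L : IsLipOp LF₂ F₂)
    (hg₁ : ProperConvexLsc g₁) (hg₂ : ProperConvexLsc g₂)
    (hdom : (edom g₁ ∩ edom g₂).Nonempty)
    (μ : ℝ) (hμ : 0 < μ)
    (hF₁sm : ∀ x y : Z, μ * ‖x - y‖ ^ 2 ≤ ⟪F₁ x - F₁ y, x - y⟫)
    (σ t : ℕ → ℝ) (hσpos : ∀ k, 0 < σ k) (hσdec : Antitone σ) (htpos : ∀ k, 0 < t k)
    (hstep : ∀ k ≥ 1, 4 * t k ^ 2 * (LF₂ + σ k * LF₁) ^ 2 + 2 * t k * σ k * μ ≤ 1)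
    (z w : ℕ → Z) (hinit : w 0 = z 1)
    (hw : ∀ k ≥ 1, IsProx (t k) (Gfun g₁ g₂ σ k)
      (z k - t k • Vop F₁ F₂ σ k (w (k - 1))) (w k))
    (hz : ∀ k ≥ 1, IsProx (t k) (Gfun g₁ g₂ σ k)
      (z k - t k • Vop F₁ F₂ σ k (w k)) (z (k + 1)))
    (D : ℕ → ℝ) (hD1 : D 1 = 0)
    (hD : ∀ k ≥ 2, D k = t (k - 1) ^ 2 / 2 *
      ‖Vop F₁ F₂ σ (k - 1) (w (k - 2)) - Vop F₁ F₂ σ (k - 1) (w (k - 1))‖ ^ 2) :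
    ∀ zz : Z, ∀ k ≥ 1,
      ((1 / 2 * ‖z (k + 1) - zz‖ ^ 2 + D (k + 1) : ℝ) : EReal) ≤
        (((1 - t k * σ k * μ) * (1 / 2 * ‖z k - zz‖ ^ 2 + D k) : ℝ) : EReal)
        - (t k : EReal) * (((⟪F₂ zz, w k - zz⟫ : ℝ) : EReal) + g₂ (w k) - g₂ zz
            + ((σ k : ℝ) : EReal) *
              (((⟪F₁ zz, w k - zz⟫ : ℝ) : EReal) + g₁ (w k) - g₁ zz)) := by
  obtain ⟨v0, hv0⟩ := hdom
  have hv01 : g₁ v0 ≠ ⊤ := LT.lt.ne (hv0.1 : g₁ v0 < ⊤)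
  have hv02 : g₂ v0 ≠ ⊤ := LT.lt.ne (hv0.2 : g₂ v0 < ⊤)
  have hb₁ := hg₁.ne_bot
  have hb₂ := hg₂.ne_bot
  have hGbot : ∀ j (y : Z), Gfun g₁ g₂ σ j y ≠ ⊥ := by
    intro j y h
    rcases EReal.add_eq_bot_iff.mp h with h' | h'
    · exact hb₂ y h'
    · rcases eq_or_ne (g₁ y) ⊤ with ht | hne
      · rw [ht, EReal.coe_mul_top_of_pos (hσpos j)] at h'
        exact (by simp : (⊤ : EReal) ≠ ⊥) h'
      · rw [← EReal.coe_toReal hne (hb₁ y), ← EReal.coe_mul] at h'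
        exact EReal.coe_ne_bot _ h'
  have hGv0 : ∀ j, Gfun g₁ g₂ σ j v0 ≠ ⊤ := by
    intro j
    show g₂ v0 + (σ j : EReal) * g₁ v0 ≠ ⊤
    rw [← EReal.coe_toReal hv01 (hb₁ v0), ← EReal.coe_toReal hv02 (hb₂ v0),
      ← EReal.coe_mul, ← EReal.coe_add]
    exact EReal.coe_ne_top _
  have hGparts : ∀ j (y : Z), Gfun g₁ g₂ σ j y ≠ ⊤ →
      ∃ r₁ r₂ : ℝ, g₁ y = (r₁ : EReal) ∧ g₂ y = (r₂ : EReal) ∧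
        Gfun g₁ g₂ σ j y = ((r₂ + σ j * r₁ : ℝ) : EReal) := by
    intro j y h
    have h1 : g₁ y ≠ ⊤ := by
      intro ht
      apply h
      show g₂ y + (σ j : EReal) * g₁ y = ⊤
      rw [ht, EReal.coe_mul_top_of_pos (hσpos j)]
      exact EReal.add_top_of_ne_bot (hb₂ y)
    have h2 : g₂ y ≠ ⊤ := by
      intro ht
      apply h
      show g₂ y + (σ j : EReal) * g₁ y = ⊤
      rw [ht]
      apply EReal.top_add_of_ne_bot
      rw [← EReal.coe_toReal h1 (hb₁ y), ← EReal.coe_mul]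
      exact EReal.coe_ne_bot _
    refine ⟨(g₁ y).toReal, (g₂ y).toReal, (EReal.coe_toReal h1 (hb₁ y)).symm,
      (EReal.coe_toReal h2 (hb₂ y)).symm, ?_⟩
    show g₂ y + (σ j : EReal) * g₁ y = _
    conv_lhs => rw [← EReal.coe_toReal h1 (hb₁ y), ← EReal.coe_toReal h2 (hb₂ y)]
    rw [← EReal.coe_mul, ← EReal.coe_add]
  intro zz k hk
  have hτ : 0 < t k := htpos k
  have hσ : 0 < σ k := hσpos k
  obtain ⟨r₁, r₂, hgx1, hgx2, hGxval⟩ :=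
    hGparts k (w k) (prox_ne_top hτ (hGbot k) (hGv0 k) (hw k hk))
  obtain ⟨q₁, q₂, hgb1, hgb2, hGbval⟩ :=
    hGparts k (z (k + 1)) (prox_ne_top hτ (hGbot k) (hGv0 k) (hz k hk))
  by_cases hzztop : g₁ zz = ⊤ ∨ g₂ zz = ⊤
  · have hX : (((⟪F₂ zz, w k - zz⟫ : ℝ) : EReal) + g₂ (w k) - g₂ zz
        + ((σ k : ℝ) : EReal) * (((⟪F₁ zz, w k - zz⟫ : ℝ) : EReal) + g₁ (w k) - g₁ zz))
        = (⊥ : EReal) := by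
      rcases hzztop with h' | h'
      · rw [h', hgx1, ← EReal.coe_add, EReal.sub_top,
          EReal.coe_mul_bot_of_pos hσ, EReal.add_bot]
      · rw [h', hgx2, ← EReal.coe_add, EReal.sub_top, EReal.bot_add]
    rw [hX, EReal.mul_bot_of_pos (by exact_mod_cast hτ), EReal.coe_sub_bot]
    exact le_top
  push_neg at hzztop
  obtain ⟨s₁, s₂, hgz1, hgz2⟩ : ∃ s₁ s₂ : ℝ, g₁ zz = (s₁ : EReal) ∧ g₂ zz = (s₂ : EReal) :=
    ⟨_, _, (EReal.coe_toReal hzztop.1 (hb₁ zz)).symm, (EReal.coe_toReal hzztop.2 (hb₂ zz)).symm⟩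
  have hGzval : Gfun g₁ g₂ σ k zz = ((s₂ + σ k * s₁ : ℝ) : EReal) := by
    show g₂ zz + (σ k : EReal) * g₁ zz = _
    rw [hgz1, hgz2, ← EReal.coe_mul, ← EReal.coe_add]
  -- ‖z k - w (k-1)‖² ≤ 2 D k
  have hAP : ‖z k - w (k - 1)‖ ^ 2 ≤ 2 * D k := by
    rcases eq_or_lt_of_le hk with hk1 | hk2
    · rw [← hk1]
      simp [hinit, hD1]
    · have hk2' : 2 ≤ k := hk2
      set j := k - 1 with hj
      have hj1 : 1 ≤ j := by omega
      have hjk : j + 1 = k := by omega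
      have Hw' := hw j hj1
      have Hz' := hz j hj1
      rw [hjk] at Hz'
      obtain ⟨a₁, a₂, -, -, hGwj⟩ :=
        hGparts j (w j) (prox_ne_top (htpos j) (hGbot j) (hGv0 j) Hw')
      obtain ⟨c₁, c₂, -, -, hGzk⟩ :=
        hGparts j (z k) (prox_ne_top (htpos j) (hGbot j) (hGv0 j) Hz')
      have n1 := isProx_real (w j) Hz' hGwj hGzk
      have n2 := isProx_real (z k) Hw' hGzk hGwj
      set u₁ := z j - t j • Vop F₁ F₂ σ j (w j) with hu₁
      set u₂ := z j - t j • Vop F₁ F₂ σ j (w (j - 1)) with hu₂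
      set d := w j - z k with hd
      have e2 : z k - w j = -d := by rw [hd, neg_sub]
      rw [e2, inner_neg_right] at n2
      have expand : ⟪u₁ - z k, d⟫ - ⟪u₂ - w j, d⟫ = ⟪u₁ - u₂, d⟫ + ‖d‖ ^ 2 := by
        rw [← real_inner_self_eq_norm_sq, ← inner_sub_left, ← inner_add_left]
        congr 1
        rw [hd]
        abel
      have hsum : ⟪u₁ - z k, d⟫ - ⟪u₂ - w j, d⟫ ≤ 0 := by linarith [n1, n2]
      have hsum2 : ⟪u₁ - u₂, d⟫ + ‖d‖ ^ 2 ≤ 0 := by rw [← expand]; exact hsum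
      have e3 : ⟪u₂ - u₁, d⟫ = -⟪u₁ - u₂, d⟫ := by rw [← inner_neg_left, neg_sub]
      have key : ‖d‖ ^ 2 ≤ ⟪u₂ - u₁, d⟫ := by rw [e3]; linarith
      have hu : u₂ - u₁ = t j • (Vop F₁ F₂ σ j (w j) - Vop F₁ F₂ σ j (w (j - 1))) := by
        rw [hu₁, hu₂, smul_sub]
        abel
      have hnorm : ‖u₂ - u₁‖ = t j * ‖Vop F₁ F₂ σ j (w j) - Vop F₁ F₂ σ j (w (j - 1))‖ := by
        rw [hu, norm_smul, Real.norm_eq_abs, abs_of_pos (htpos j)]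
      have hcs : ⟪u₂ - u₁, d⟫ ≤ ‖u₂ - u₁‖ * ‖d‖ := real_inner_le_norm _ _
      have hdle : ‖d‖ ^ 2 ≤ ‖u₂ - u₁‖ ^ 2 := by
        nlinarith [norm_nonneg d, norm_nonneg (u₂ - u₁), sq_nonneg (‖u₂ - u₁‖ - ‖d‖)]
      have hDk := hD k hk2'
      rw [← hj] at hDk
      rw [show k - 2 = j - 1 from by omega] at hDk
      have hzw : ‖z k - w j‖ = ‖d‖ := by rw [hd, norm_sub_rev]
      rw [hzw, hDk, norm_sub_rev (Vop F₁ F₂ σ j (w (j - 1)))]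
      rw [hnorm] at hdle
      nlinarith [hdle]
  -- other scalar ingredients
  have hVlip : ‖Vop F₁ F₂ σ k (w k) - Vop F₁ F₂ σ k (w (k - 1))‖
      ≤ (LF₂ + σ k * LF₁) * ‖w k - w (k - 1)‖ := by
    have e : Vop F₁ F₂ σ k (w k) - Vop F₁ F₂ σ k (w (k - 1))
        = (F₂ (w k) - F₂ (w (k - 1))) + σ k • (F₁ (w k) - F₁ (w (k - 1))) := by
      simp only [Vop, smul_sub]
      abel
    rw [e]
    calc ‖(F₂ (w k) - F₂ (w (k - 1))) + σ k • (F₁ (w k) - F₁ (w (k - 1)))‖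
        ≤ ‖F₂ (w k) - F₂ (w (k - 1))‖ + ‖σ k • (F₁ (w k) - F₁ (w (k - 1)))‖ :=
          norm_add_le _ _
      _ ≤ LF₂ * ‖w k - w (k - 1)‖ + σ k * (LF₁ * ‖w k - w (k - 1)‖) := by
          rw [norm_smul, Real.norm_eq_abs, abs_of_pos hσ]
          exact add_le_add (hF₂L _ _) (mul_le_mul_of_nonneg_left (hF₁L _ _) hσ.le)
      _ = (LF₂ + σ k * LF₁) * ‖w k - w (k - 1)‖ := by ring
  have hDk1 : D (k + 1) = t k ^ 2 / 2 *
      ‖Vop F₁ F₂ σ k (w k) - Vop F₁ F₂ σ k (w (k - 1))‖ ^ 2 := by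
    have h := hD (k + 1) (by omega)
    rw [show k + 1 - 1 = k from by omega, show k + 1 - 2 = k - 1 from by omega,
      norm_sub_rev] at h
    exact h
  have hDnn : 0 ≤ D k := by
    rcases eq_or_lt_of_le hk with hk1 | hk2
    · rw [← hk1, hD1]
    · rw [hD k hk2]
      positivity
  have hM2 : 0 ≤ ⟪F₂ (w k) - F₂ zz, w k - zz⟫ := hF₂m (w k) zz
  have hM1 : μ * ‖w k - zz‖ ^ 2 ≤ ⟪F₁ (w k) - F₁ zz, w k - zz⟫ := hF₁sm (w k) zz
  have hQb : -⟪Vop F₁ F₂ σ k (w k) - Vop F₁ F₂ σ k (w (k - 1)), z (k + 1) - w k⟫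
      ≤ ‖Vop F₁ F₂ σ k (w k) - Vop F₁ F₂ σ k (w (k - 1))‖ * ‖z (k + 1) - w k‖ := by
    have h := real_inner_le_norm (Vop F₁ F₂ σ k (w (k - 1)) - Vop F₁ F₂ σ k (w k))
      (z (k + 1) - w k)
    rw [norm_sub_rev (Vop F₁ F₂ σ k (w (k - 1)))] at h
    have e : ⟪Vop F₁ F₂ σ k (w (k - 1)) - Vop F₁ F₂ σ k (w k), z (k + 1) - w k⟫
        = -⟪Vop F₁ F₂ σ k (w k) - Vop F₁ F₂ σ k (w (k - 1)), z (k + 1) - w k⟫ := by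
      rw [← inner_neg_left, neg_sub]
    rw [e] at h
    exact h
  have hTA : ‖z k - zz‖ ≤ ‖z k - w k‖ + ‖w k - zz‖ := by
    have e : z k - zz = (z k - w k) + (w k - zz) := by abel
    rw [e]
    exact norm_add_le _ _
  have hTP : ‖w k - w (k - 1)‖ ≤ ‖z k - w k‖ + ‖z k - w (k - 1)‖ := by
    have e : w k - w (k - 1) = -(z k - w k) + (z k - w (k - 1)) := by abel
    rw [e]
    calc ‖-(z k - w k) + (z k - w (k - 1))‖
        ≤ ‖-(z k - w k)‖ + ‖z k - w (k - 1)‖ := norm_add_le _ _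
      _ = ‖z k - w k‖ + ‖z k - w (k - 1)‖ := by rw [norm_neg]
  -- the two prox inequalities, scalarized
  have h1 := isProx_real zz (hz k hk) hGzval hGbval
  have h2 := isProx_real (z (k + 1)) (hw k hk) hGbval hGxval
  have I1 : ⟪z k - z (k + 1), zz - z (k + 1)⟫
      = (‖z k - z (k + 1)‖ ^ 2 + ‖zz - z (k + 1)‖ ^ 2 - ‖z k - zz‖ ^ 2) / 2 := by
    have h := norm_sub_sq_real (z k - z (k + 1)) (zz - z (k + 1))
    rw [sub_sub_sub_cancel_right] at h
    linarith
  have I2 : ⟪z k - w k, z (k + 1) - w k⟫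
      = (‖z k - w k‖ ^ 2 + ‖z (k + 1) - w k‖ ^ 2 - ‖z k - z (k + 1)‖ ^ 2) / 2 := by
    have h := norm_sub_sq_real (z k - w k) (z (k + 1) - w k)
    rw [sub_sub_sub_cancel_right] at h
    linarith
  have d2 : ⟪Vop F₁ F₂ σ k (w k), zz - z (k + 1)⟫
      = ⟪Vop F₁ F₂ σ k (w k), zz - w k⟫ + ⟪Vop F₁ F₂ σ k (w k), w k - z (k + 1)⟫ := by
    rw [← inner_add_right, sub_add_sub_cancel]
  have d3 : ⟪Vop F₁ F₂ σ k (w k), zz - w k⟫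
      = -(⟪F₂ zz, w k - zz⟫ + σ k * ⟪F₁ zz, w k - zz⟫
          + ⟪F₂ (w k) - F₂ zz, w k - zz⟫ + σ k * ⟪F₁ (w k) - F₁ zz, w k - zz⟫) := by
    have e : Vop F₁ F₂ σ k (w k)
        = (F₂ zz + σ k • F₁ zz) + ((F₂ (w k) - F₂ zz) + σ k • (F₁ (w k) - F₁ zz)) := by
      simp only [Vop, smul_sub]
      abel
    have e2 : zz - w k = -(w k - zz) := by rw [neg_sub]
    rw [e, e2, inner_neg_right, inner_add_left, inner_add_left, inner_add_left,
      real_inner_smul_left, real_inner_smul_left]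
    ring
  have d4 : ⟪Vop F₁ F₂ σ k (w k), w k - z (k + 1)⟫
      = -(⟪Vop F₁ F₂ σ k (w (k - 1)), z (k + 1) - w k⟫
          + ⟪Vop F₁ F₂ σ k (w k) - Vop F₁ F₂ σ k (w (k - 1)), z (k + 1) - w k⟫) := by
    have e2 : w k - z (k + 1) = -(z (k + 1) - w k) := by rw [neg_sub]
    rw [e2, inner_neg_right]
    congr 1
    rw [← inner_add_left]
    congr 1
    abel
  rw [sub_right_comm, inner_sub_left, real_inner_smul_left, I1, d2, d3, d4] at h1
  rw [sub_right_comm, inner_sub_left, real_inner_smul_left, I2] at h2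
  -- quantitative ingredients
  have hstepk := hstep k hk
  -- scalar abbreviations
  set LL := LF₂ + σ k * LF₁ with hLL
  set T := t k with hT
  set S := σ k with hS
  set nW := ‖Vop F₁ F₂ σ k (w k) - Vop F₁ F₂ σ k (w (k - 1))‖ with hnW
  set qQ := ⟪Vop F₁ F₂ σ k (w k) - Vop F₁ F₂ σ k (w (k - 1)), z (k + 1) - w k⟫ with hqQ
  set qVp := ⟪Vop F₁ F₂ σ k (w (k - 1)), z (k + 1) - w k⟫ with hqVp
  set i1 := ⟪F₁ zz, w k - zz⟫ with hi1
  set i2 := ⟪F₂ zz, w k - zz⟫ with hi2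
  set m1 := ⟪F₁ (w k) - F₁ zz, w k - zz⟫ with hm1
  set m2 := ⟪F₂ (w k) - F₂ zz, w k - zz⟫ with hm2
  set nA := ‖z k - zz‖ with hnA
  set nB := ‖z (k + 1) - zz‖ with hnB
  set nzzB := ‖zz - z (k + 1)‖ with hnzzB
  set nAB := ‖z k - z (k + 1)‖ with hnAB
  set nAX := ‖z k - w k‖ with hnAX
  set nBX := ‖z (k + 1) - w k‖ with hnBX
  set nXZ := ‖w k - zz‖ with hnXZ
  set nXP := ‖w k - w (k - 1)‖ with hnXP
  set nAP := ‖z k - w (k - 1)‖ with hnAP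
  clear_value LL T S nW qQ qVp i1 i2 m1 m2 nA nB nzzB nAB nAX nBX nXZ nXP nAP
  have hτσμ : 0 ≤ T * S * μ := mul_nonneg (mul_nonneg hτ.le hσ.le) hμ.le
  have hQ2 : T * (-qQ) ≤ T ^ 2 * nW ^ 2 / 2 + nBX ^ 2 / 2 := by
    have hmul := mul_le_mul_of_nonneg_left hQb hτ.le
    nlinarith only [hmul, sq_nonneg (T * nW - nBX)]
  have hnWnn : 0 ≤ nW := hnW ▸ norm_nonneg _
  have hW2 : nW ^ 2 ≤ LL ^ 2 * nXP ^ 2 := by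
    have h := mul_self_le_mul_self hnWnn hVlip
    nlinarith only [h]
  have hnAnn : 0 ≤ nA := hnA ▸ norm_nonneg _
  have hnAXnn : 0 ≤ nAX := hnAX ▸ norm_nonneg _
  have hnXZnn : 0 ≤ nXZ := hnXZ ▸ norm_nonneg _
  have hnXPnn : 0 ≤ nXP := hnXP ▸ norm_nonneg _
  have hnAPnn : 0 ≤ nAP := hnAP ▸ norm_nonneg _
  have hXZ2 : nA ^ 2 ≤ 2 * nAX ^ 2 + 2 * nXZ ^ 2 := by
    nlinarith only [hTA, hnAnn, hnAXnn, hnXZnn, sq_nonneg (nAX - nXZ)]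
  have hXP2 : nXP ^ 2 ≤ 2 * nAX ^ 2 + 2 * nAP ^ 2 := by
    nlinarith only [hTP, hnXPnn, hnAXnn, hnAPnn, sq_nonneg (nAX - nAP)]
  have e1 : 0 ≤ T * S * μ * (2 * nAX ^ 2 + 2 * nXZ ^ 2 - nA ^ 2) :=
    mul_nonneg hτσμ (by linarith only [hXZ2])
  have e2 : 0 ≤ T ^ 2 * (LL ^ 2 * nXP ^ 2 - nW ^ 2) :=
    mul_nonneg (by positivity) (by linarith only [hW2])
  have e3 : 0 ≤ T ^ 2 * LL ^ 2 * (2 * nAX ^ 2 + 2 * nAP ^ 2 - nXP ^ 2) :=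
    mul_nonneg (by positivity) (by linarith only [hXP2])
  have e4 : 0 ≤ T ^ 2 * LL ^ 2 * (2 * D k - nAP ^ 2) :=
    mul_nonneg (by positivity) (by linarith only [hAP])
  have e5 : 0 ≤ nAX ^ 2 * (1 - 2 * (T * S * μ) - 4 * (T ^ 2 * LL ^ 2)) :=
    mul_nonneg (sq_nonneg _) (by linarith only [hstepk])
  have e6 : 0 ≤ D k * (1 - T * S * μ - 4 * (T ^ 2 * LL ^ 2)) :=
    mul_nonneg hDnn (by linarith only [hstepk, hτσμ])
  have e7 : 0 ≤ T * (m2 + S * (m1 - μ * nXZ ^ 2)) :=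
    mul_nonneg hτ.le (add_nonneg hM2 (mul_nonneg hσ.le (by linarith only [hM1])))
  have hBrev : nB ^ 2 = nzzB ^ 2 := by rw [hnB, hnzzB, norm_sub_rev]
  have main : (1 / 2 * nB ^ 2 + D (k + 1) : ℝ) ≤
      (1 - T * S * μ) * (1 / 2 * nA ^ 2 + D k)
        - T * (i2 + r₂ - s₂ + S * (i1 + r₁ - s₁)) := by
    linarith only [h1, h2, hQ2, hDk1, hBrev, e1, e2, e3, e4, e5, e6, e7]
  rw [hgx1, hgx2, hgz1, hgz2]
  exact_mod_cast main


end
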